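/- Let p₁, ..., p_K be independent random variables with common mean θ and Var(p_i) = θ(1−θ)/N_i, and p = max_i p_i, N_{(1)} = min_i N_i. Then for any i ≠ j, |E[p(p_j − p_i)]| ≤ (2√K + 1)·θ(1−θ)/N_{(1)}. -/

import Mathlib

open MeasureTheory ProbabilityTheory

section Aux

variable {Ω : Type*} [MeasurableSpace Ω] {μ : Measure Ω}

lemma aux_int_mul {f g : Ω → ℝ} (hf : MemLp f 2 μ) (hg : MemLp g 2 μ) :
    Integrable (fun ω => f ω * g ω) μ := by
  have h : Integrable (fun ω => (f ω ^ 2 + g ω ^ 2) / 2) μ :=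
    (hf.integrable_sq.add hg.integrable_sq).div_const 2
  refine h.mono' (hf.aestronglyMeasurable.mul hg.aestronglyMeasurable) ?_
  filter_upwards with ω
  simp only [norm_mul, Real.norm_eq_abs]
  nlinarith [sq_nonneg (|f ω| - |g ω|), sq_abs (f ω), sq_abs (g ω),
    abs_nonneg (f ω), abs_nonneg (g ω)]

lemma aux_cs {f g : Ω → ℝ} (hf : MemLp f 2 μ) (hg : MemLp g 2 μ) :
    |∫ ω, f ω * g ω ∂μ| ≤
      Real.sqrt (∫ ω, f ω ^ 2 ∂μ) * Real.sqrt (∫ ω, g ω ^ 2 ∂μ) := by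
  set A := ∫ ω, f ω ^ 2 ∂μ with hA'
  set B := ∫ ω, g ω ^ 2 ∂μ with hB'
  set C := ∫ ω, f ω * g ω ∂μ with hC'
  have hA : 0 ≤ A := integral_nonneg fun ω => sq_nonneg _
  have hB : 0 ≤ B := integral_nonneg fun ω => sq_nonneg _
  have h1 : Integrable (fun ω => f ω * g ω) μ := aux_int_mul hf hg
  have key : ∀ t : ℝ, 0 ≤ B * (t * t) + (2 * C) * t + A := by
    intro t
    have h2 : (0:ℝ) ≤ ∫ ω, (f ω + t * g ω) ^ 2 ∂μ := integral_nonneg fun ω => sq_nonneg _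
    have h3 : ∫ ω, (f ω + t * g ω) ^ 2 ∂μ = A + (2 * C) * t + B * (t * t) := by
      have he : ∀ ω, (f ω + t * g ω) ^ 2
          = f ω ^ 2 + (2 * t) * (f ω * g ω) + (t * t) * g ω ^ 2 := fun ω => by ring
      simp_rw [he]
      have hIa : Integrable (fun ω => f ω ^ 2 + 2 * t * (f ω * g ω)) μ :=
        hf.integrable_sq.add (h1.const_mul _)
      have hIb : Integrable (fun ω => t * t * g ω ^ 2) μ := hg.integrable_sq.const_mul _
      have hIc : Integrable (fun ω => 2 * t * (f ω * g ω)) μ := h1.const_mul _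
      rw [integral_add hIa hIb, integral_add hf.integrable_sq hIc, integral_const_mul _ _,
        integral_const_mul _ _, ← hA', ← hB', ← hC']
      ring
    linarith
  have hd := discrim_le_zero key
  rw [discrim] at hd
  have hC2 : C ^ 2 ≤ A * B := by nlinarith
  calc |C| = Real.sqrt (C ^ 2) := (Real.sqrt_sq_eq_abs C).symm
    _ ≤ Real.sqrt (A * B) := Real.sqrt_le_sqrt hC2
    _ = Real.sqrt A * Real.sqrt B := Real.sqrt_mul hA B

end Aux

/-- Let `p₁, ..., p_K` be independent random variables with common mean `θ` and
`Var(p_i) = θ(1−θ)/N_i`, and let `p = max_i p_i`, `N_(1) = min_i N_i`. Then for any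
`i ≠ j`, `|E[p (p_j − p_i)]| ≤ (2√K + 1) θ(1−θ)/N_(1)`. -/
theorem abs_expectation_max_diff_bound {Ω : Type*} [MeasurableSpace Ω]
    (μ : Measure Ω) [IsProbabilityMeasure μ] (K : ℕ) [NeZero K]
    (p : Fin K → Ω → ℝ) (N : Fin K → ℕ) (θ : ℝ)
    (hθ0 : 0 < θ) (hθ1 : θ < 1) (hN : ∀ i, 0 < N i)
    (hmeas : ∀ i, Measurable (p i))
    (hL2 : ∀ i, MemLp (p i) 2 μ)
    (hindep : iIndepFun p μ)
    (hmean : ∀ i, ∫ ω, p i ω ∂μ = θ)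
    (hvar : ∀ i, ∫ ω, (p i ω - θ) ^ 2 ∂μ = θ * (1 - θ) / N i)
    (i j : Fin K) (hij : i ≠ j) :
    |∫ ω, (⨆ k, p k ω) * (p j ω - p i ω) ∂μ| ≤
      (2 * Real.sqrt K + 1) * θ * (1 - θ) / (⨅ k, (N k : ℝ)) := by
  haveI : Nonempty (Fin K) := Fin.pos_iff_nonempty.1 (Nat.pos_of_ne_zero (NeZero.ne K))
  set V : ℝ := θ * (1 - θ) / (⨅ k, (N k : ℝ)) with hV
  have hθθ : 0 ≤ θ * (1 - θ) := by nlinarith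
  have hinf1 : (1:ℝ) ≤ ⨅ k, (N k : ℝ) :=
    le_ciInf fun k => by exact_mod_cast hN k
  have hinf_pos : 0 < ⨅ k, (N k : ℝ) := lt_of_lt_of_le one_pos hinf1
  have hinf_le : ∀ k, (⨅ l, (N l : ℝ)) ≤ N k := fun k => ciInf_le (Finite.bddBelow_range _) k
  have hVle : ∀ k, θ * (1 - θ) / N k ≤ V := by
    intro k
    rw [hV]
    gcongr
    exact hinf_le k
  have hV0 : 0 ≤ V := div_nonneg hθθ hinf_pos.le
  have hLc : ∀ k, MemLp (fun ω => p k ω - θ) 2 μ := fun k => (hL2 k).sub (memLp_const θ)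
  have hInt : ∀ k, Integrable (p k) μ := fun k => (hL2 k).integrable one_le_two
  have hmeanc : ∀ k, ∫ ω, (p k ω - θ) ∂μ = 0 := by
    intro k
    rw [integral_sub (hInt k) (integrable_const θ), hmean k, integral_const]
    simp
  have hcross : ∀ k l : Fin K, k ≠ l → ∫ ω, (p k ω - θ) * (p l ω - θ) ∂μ = 0 := by
    intro k l hkl
    have hind : IndepFun (fun ω => p k ω - θ) (fun ω => p l ω - θ) μ :=
      (hindep.indepFun hkl).comp (measurable_id.sub_const θ) (measurable_id.sub_const θ)
    rw [hind.integral_fun_mul_eq_mul_integral (hLc k).aestronglyMeasurable (hLc l).aestronglyMeasurable,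
      hmeanc k, hmeanc l, mul_zero]
  have hdiff : ∀ k : Fin K, k ≠ i →
      ∫ ω, (p k ω - p i ω) ^ 2 ∂μ = θ * (1 - θ) / N k + θ * (1 - θ) / N i := by
    intro k hk
    have hexp : ∀ ω, (p k ω - p i ω) ^ 2
        = ((p k ω - θ) ^ 2 + (p i ω - θ) ^ 2) - 2 * ((p k ω - θ) * (p i ω - θ)) :=
      fun ω => by ring
    have hintm : Integrable (fun ω => (p k ω - θ) * (p i ω - θ)) μ :=
      aux_int_mul (hLc k) (hLc i)
    simp_rw [hexp]
    have hIa : Integrable (fun ω => (p k ω - θ) ^ 2 + (p i ω - θ) ^ 2) μ :=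
      (hLc k).integrable_sq.add (hLc i).integrable_sq
    have hIb : Integrable (fun ω => 2 * ((p k ω - θ) * (p i ω - θ))) μ := hintm.const_mul 2
    rw [integral_sub hIa hIb, integral_add (hLc k).integrable_sq (hLc i).integrable_sq,
      integral_const_mul _ _, hcross k i hk, hvar k, hvar i]
    ring
  have hdiff_le : ∀ k : Fin K, ∫ ω, (p k ω - p i ω) ^ 2 ∂μ ≤ 2 * V := by
    intro k
    by_cases hk : k = i
    · subst hk
      simp only [sub_self, ne_eq, OfNat.ofNat_ne_zero, not_false_eq_true, zero_pow,
        integral_zero]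
      linarith
    · rw [hdiff k hk]
      have h1 := hVle k
      have h2 := hVle i
      linarith
  -- the max
  have hMmeas : Measurable (fun ω => ⨆ k, p k ω) := by
    have h1 : Measurable (Finset.univ.sup' Finset.univ_nonempty p) :=
      Finset.measurable_sup' _ fun n _ => hmeas n
    have h2 : (fun ω => ⨆ k, p k ω) = Finset.univ.sup' Finset.univ_nonempty p := by
      funext ω
      rw [← Finset.sup'_univ_eq_ciSup (fun k => p k ω)]
      exact (Finset.sup'_apply _ _ _).symm
    rwa [h2]
  have hdom : ∀ ω, ((⨆ k, p k ω) - p i ω) ^ 2 ≤ ∑ k, (p k ω - p i ω) ^ 2 := by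
    intro ω
    obtain ⟨m, -, hm⟩ := Finset.exists_mem_eq_sup' (Finset.univ_nonempty) (fun k => p k ω)
    rw [← Finset.sup'_univ_eq_ciSup (fun k => p k ω), hm]
    exact Finset.single_le_sum (f := fun k => (p k ω - p i ω) ^ 2)
      (fun k _ => sq_nonneg _) (Finset.mem_univ m)
  have hsum_int : Integrable (fun ω => ∑ k, (p k ω - p i ω) ^ 2) μ := by
    apply integrable_finset_sum
    intro k _
    exact (((hL2 k).sub (hL2 i)) : MemLp (fun ω => p k ω - p i ω) 2 μ).integrable_sq
  have hMi : MemLp (fun ω => (⨆ k, p k ω) - p i ω) 2 μ := by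
    have hm : AEStronglyMeasurable (fun ω => (⨆ k, p k ω) - p i ω) μ :=
      (hMmeas.sub (hmeas i)).aestronglyMeasurable
    rw [memLp_two_iff_integrable_sq hm]
    refine hsum_int.mono' ((hMmeas.sub (hmeas i)).pow_const 2).aestronglyMeasurable ?_
    filter_upwards with ω
    rw [Real.norm_eq_abs, abs_of_nonneg (sq_nonneg _)]
    exact hdom ω
  have hMi_sq : ∫ ω, ((⨆ k, p k ω) - p i ω) ^ 2 ∂μ ≤ 2 * K * V := by
    calc ∫ ω, ((⨆ k, p k ω) - p i ω) ^ 2 ∂μ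
        ≤ ∫ ω, ∑ k, (p k ω - p i ω) ^ 2 ∂μ :=
          integral_mono_of_nonneg (Filter.Eventually.of_forall fun ω => sq_nonneg _)
            hsum_int (Filter.Eventually.of_forall hdom)
      _ = ∑ k, ∫ ω, (p k ω - p i ω) ^ 2 ∂μ := by
          apply integral_finset_sum
          intro k _
          exact (((hL2 k).sub (hL2 i)) : MemLp (fun ω => p k ω - p i ω) 2 μ).integrable_sq
      _ ≤ ∑ _k : Fin K, 2 * V := Finset.sum_le_sum fun k _ => hdiff_le k
      _ = K * (2 * V) := by
          rw [Finset.sum_const, Finset.card_univ, Fintype.card_fin, nsmul_eq_mul]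
      _ = 2 * K * V := by ring
  have hji : MemLp (fun ω => p j ω - p i ω) 2 μ := (hL2 j).sub (hL2 i)
  have hCS : |∫ ω, ((⨆ k, p k ω) - p i ω) * (p j ω - p i ω) ∂μ|
      ≤ Real.sqrt (∫ ω, ((⨆ k, p k ω) - p i ω) ^ 2 ∂μ)
        * Real.sqrt (∫ ω, (p j ω - p i ω) ^ 2 ∂μ) := aux_cs hMi hji
  have hsqrt_prod : Real.sqrt (2 * K * V) * Real.sqrt (2 * V) = 2 * Real.sqrt K * V := by
    rw [← Real.sqrt_mul (by positivity)]
    rw [show (2 * (K:ℝ) * V) * (2 * V) = (2 * Real.sqrt K * V) ^ 2 by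
      rw [mul_pow, mul_pow, Real.sq_sqrt (Nat.cast_nonneg K)]; ring]
    exact Real.sqrt_sq (by positivity)
  have hfirst : |∫ ω, ((⨆ k, p k ω) - p i ω) * (p j ω - p i ω) ∂μ|
      ≤ 2 * Real.sqrt K * V := by
    refine hCS.trans ?_
    rw [← hsqrt_prod]
    exact mul_le_mul (Real.sqrt_le_sqrt hMi_sq) (Real.sqrt_le_sqrt (hdiff_le j))
      (Real.sqrt_nonneg _) (Real.sqrt_nonneg _)
  -- second term
  have hpij : ∫ ω, p i ω * p j ω ∂μ = θ * θ := by
    rw [(hindep.indepFun hij).integral_fun_mul_eq_mul_integral (hL2 i).aestronglyMeasurable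
      (hL2 j).aestronglyMeasurable, hmean i, hmean j]
  have hpii : ∫ ω, p i ω * p i ω ∂μ = θ * (1 - θ) / N i + θ * θ := by
    have he : ∀ ω, p i ω * p i ω = ((p i ω - θ) ^ 2 + 2 * θ * p i ω) - θ * θ :=
      fun ω => by ring
    simp_rw [he]
    have hIa : Integrable (fun ω => (p i ω - θ) ^ 2 + 2 * θ * p i ω) μ :=
      (hLc i).integrable_sq.add ((hInt i).const_mul _)
    have hIc : Integrable (fun ω => 2 * θ * p i ω) μ := (hInt i).const_mul _
    rw [integral_sub hIa (integrable_const _),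
      integral_add (hLc i).integrable_sq hIc, integral_const_mul _ _,
      hvar i, hmean i, integral_const]
    simp
    ring
  have hsecond : ∫ ω, p i ω * (p j ω - p i ω) ∂μ = -(θ * (1 - θ) / N i) := by
    have he : ∀ ω, p i ω * (p j ω - p i ω) = p i ω * p j ω - p i ω * p i ω :=
      fun ω => by ring
    simp_rw [he]
    rw [integral_sub (aux_int_mul (hL2 i) (hL2 j)) (aux_int_mul (hL2 i) (hL2 i)), hpij, hpii]
    ring
  have hsecond_abs : |∫ ω, p i ω * (p j ω - p i ω) ∂μ| ≤ V := by
    rw [hsecond, abs_neg, abs_of_nonneg (by positivity)]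
    exact hVle i
  have hdecomp : ∫ ω, (⨆ k, p k ω) * (p j ω - p i ω) ∂μ
      = (∫ ω, ((⨆ k, p k ω) - p i ω) * (p j ω - p i ω) ∂μ)
        + ∫ ω, p i ω * (p j ω - p i ω) ∂μ := by
    have he : ∀ ω, (⨆ k, p k ω) * (p j ω - p i ω)
        = ((⨆ k, p k ω) - p i ω) * (p j ω - p i ω) + p i ω * (p j ω - p i ω) :=
      fun ω => by ring
    simp_rw [he]
    exact integral_add (aux_int_mul hMi hji) (aux_int_mul (hL2 i) hji)
  have hfinal : |∫ ω, (⨆ k, p k ω) * (p j ω - p i ω) ∂μ|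
      ≤ (2 * Real.sqrt K + 1) * V := by
    rw [hdecomp]
    calc |(∫ ω, ((⨆ k, p k ω) - p i ω) * (p j ω - p i ω) ∂μ)
          + ∫ ω, p i ω * (p j ω - p i ω) ∂μ|
        ≤ |∫ ω, ((⨆ k, p k ω) - p i ω) * (p j ω - p i ω) ∂μ|
          + |∫ ω, p i ω * (p j ω - p i ω) ∂μ| := abs_add_le _ _
      _ ≤ 2 * Real.sqrt K * V + V := add_le_add hfirst hsecond_abs
      _ = (2 * Real.sqrt K + 1) * V := by ring
  refine hfinal.trans_eq ?_
  rw [hV]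
  ring
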